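/- arXiv:1701.02152 — 3 statements merged into one kernel-verified Lean document; each statement's English description precedes it below -/
import Mathlib

section
/- Let p : E ⥤ B be a Grothendieck opfibration, C a cocomplete category, and F : E ⥤ C a functor. Then for every object b of B, the pointwise left Kan extension of F along p evaluated at b is naturally isomorphic to the colimit of the restriction of F to the fiber E_b. -/
open CategoryTheory CategoryTheory.Functor CategoryTheory.Limits

universe v₂ u u₂

/-- A functor `p : E ⥤ B` is a Grothendieck opfibration if every morphism of `B`
out of `p.obj e` admits a cocartesian lift with source `e`. -/
def IsGrothendieckOpfibration {E B : Type u} [SmallCategory E] [SmallCategory B]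
    (p : E ⥤ B) : Prop :=
  ∀ {a : E} {S : B} (f : p.obj a ⟶ S), ∃ (b : E) (φ : a ⟶ b), p.IsStronglyCocartesian f φ

variable {E B : Type u} [SmallCategory E] [SmallCategory B]

/-- The natural inclusion of the fiber `E_b` of `p : E ⥤ B` over `b` into the comma
category `p/b`, sending `e` to `(e, 𝟙 b)`. -/
@[simps]
def fiberToCostructuredArrow (p : E ⥤ B) (b : B) : Fiber p b ⥤ CostructuredArrow p b where
  obj e := CostructuredArrow.mk (eqToHom e.2)
  map {e e'} φ := CostructuredArrow.homMk φ.1 (by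
    have := φ.2
    rw [IsHomLift.fac' p (𝟙 b) φ.1]
    simp)

/-- The inclusion of the fiber into the comma category is final. -/
lemma fiberToCostructuredArrow_final (p : E ⥤ B) (hp : IsGrothendieckOpfibration p) (b : B) :
    (fiberToCostructuredArrow p b).Final := by
  constructor
  intro d
  obtain ⟨e', φ, h⟩ := hp d.hom
  haveI := h
  have he' : p.obj e' = b := IsHomLift.codomain_eq p d.hom φ
  have hw : p.map φ ≫ (eqToHom he' : p.obj e' ⟶ b) = d.hom := by
    rw [IsHomLift.fac' p d.hom φ]; simp
  let X : StructuredArrow d (fiberToCostructuredArrow p b) :=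
    StructuredArrow.mk (Y := Fiber.mk he') (CostructuredArrow.homMk φ hw)
  have key : ∀ y : StructuredArrow d (fiberToCostructuredArrow p b), Nonempty (X ⟶ y) := by
    intro y
    haveI : IsHomLift p d.hom y.hom.left := by
      apply IsHomLift.of_fac' p d.hom y.hom.left rfl y.right.2
      have := CostructuredArrow.w y.hom
      dsimp [fiberToCostructuredArrow] at this ⊢
      rw [← this]; simp
      erw [eqToHom_trans, eqToHom_refl, Category.comp_id]
    obtain ⟨χ, ⟨hχ₁, hχ₂⟩, -⟩ :=
      IsStronglyCocartesian.universal_property p d.hom φ (𝟙 b) d.hom (by simp) y.hom.left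
    let ψ : Fiber.mk he' ⟶ y.right := ⟨χ, hχ₁⟩
    exact ⟨StructuredArrow.homMk ψ (by
      apply CostructuredArrow.hom_ext
      exact hχ₂)⟩
  have : Nonempty (StructuredArrow d (fiberToCostructuredArrow p b)) := ⟨X⟩
  apply zigzag_isConnected
  intro j₁ j₂
  exact Relation.ReflTransGen.trans
    (Relation.ReflTransGen.single (Or.inr (key j₁)))
    (Relation.ReflTransGen.single (Or.inl (key j₂)))

/-- If `p : E ⥤ B` is a Grothendieck opfibration and `C` is cocomplete, then the
pointwise left Kan extension of `F : E ⥤ C` along `p`, evaluated at `b : B`, is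
naturally isomorphic to the colimit of the restriction of `F` to the fiber `E_b`. -/
theorem pointwiseLeftKanExtension_obj_iso_colimit_fiber
    {C : Type u₂} [Category.{v₂} C] [HasColimitsOfSize.{u, u} C]
    (p : E ⥤ B) (hp : IsGrothendieckOpfibration p) (F : E ⥤ C) (b : B) :
    Nonempty ((p.pointwiseLeftKanExtension F).obj b ≅
      colimit (Fiber.fiberInclusion ⋙ F : Fiber p b ⥤ C)) := by
  haveI := fiberToCostructuredArrow_final p hp b
  exact ⟨(Functor.Final.colimitIso (fiberToCostructuredArrow p b)
    (CostructuredArrow.proj p b ⋙ F)).symm⟩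
end

section
/- Let p : E ⥤ B be a Grothendieck fibration, C a complete category, and F : E ⥤ C a functor. Then for every object b of B, the pointwise right Kan extension of F along p evaluated at b is naturally isomorphic to the limit of the restriction of F to the fiber E_b. -/
open CategoryTheory CategoryTheory.Functor CategoryTheory.Limits

universe v₂ u u₂

variable {E B : Type u} [SmallCategory E] [SmallCategory B]

/-- The natural inclusion of the fiber `E_b` of `p : E ⥤ B` over `b` into the comma
category `b/p` of pairs `(e, u : b ⟶ p e)`, sending `e` to `(e, 𝟙 b)`. -/
@[simps]
def fiberToStructuredArrow (p : E ⥤ B) (b : B) : Fiber p b ⥤ StructuredArrow b p where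
  obj e := StructuredArrow.mk (eqToHom e.2.symm)
  map {e e'} φ := StructuredArrow.homMk φ.1 (by
    have := φ.2
    rw [IsHomLift.fac' p (𝟙 b) φ.1]
    simp)

section Aux

open Functor.IsPreFibered Functor.IsStronglyCartesian IsHomLift

variable (p : E ⥤ B) [p.IsFibered] (b : B)

lemma aux_isHomLift {e : Fiber p b} {X : StructuredArrow b p}
    (f : (fiberToStructuredArrow p b).obj e ⟶ X) : p.IsHomLift X.hom f.right := by
  apply IsHomLift.of_fac p X.hom f.right e.2 rfl
  rw [← StructuredArrow.w f]
  simp [fiberToStructuredArrow]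

/-- The hom equivalence for the adjunction. -/
noncomputable def fiberHomEquiv (e : Fiber p b) (X : StructuredArrow b p) :
    ((fiberToStructuredArrow p b).obj e ⟶ X) ≃ (e ⟶ (Subtype.mk (pullbackObj rfl X.hom) (pullbackObj_proj rfl X.hom) : Fiber p b)) where
  toFun f :=
    haveI := aux_isHomLift p b f
    ⟨(IsStronglyCartesian.map p X.hom (pullbackMap rfl X.hom) (Category.id_comp X.hom).symm f.right : _),
      IsStronglyCartesian.map_isHomLift p X.hom (pullbackMap rfl X.hom) (Category.id_comp X.hom).symm f.right⟩
  invFun g :=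
    haveI := g.2
    StructuredArrow.homMk (g.1 ≫ pullbackMap rfl X.hom) (by
      haveI : p.IsHomLift (𝟙 b ≫ X.hom) (g.1 ≫ pullbackMap rfl X.hom) := inferInstance
      erw [show ((fiberToStructuredArrow p b).obj e).hom = eqToHom e.2.symm from rfl,
        IsHomLift.fac' p (𝟙 b ≫ X.hom) (g.1 ≫ pullbackMap rfl X.hom)]
      erw [eqToHom_trans_assoc]
      simp)
  left_inv f := by
    haveI := aux_isHomLift p b f
    apply StructuredArrow.hom_ext
    simpa using IsStronglyCartesian.fac p X.hom (pullbackMap rfl X.hom)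
      (Category.id_comp X.hom).symm f.right
  right_inv g := by
    haveI := g.2
    haveI : p.IsHomLift (𝟙 ((Functor.fromPUnit b).obj X.left)) g.1 := g.2
    haveI : p.IsHomLift X.hom (g.1 ≫ pullbackMap rfl X.hom) :=
      IsHomLift.comp_lift_id_left' p b g.1 X.hom (pullbackMap rfl X.hom)
    apply Fiber.hom_ext
    have := (IsStronglyCartesian.map_uniq p X.hom (pullbackMap rfl X.hom)
      (Category.id_comp X.hom).symm (g.1 ≫ pullbackMap rfl X.hom) g.1 rfl).symm
    exact this

lemma fiberHomEquiv_natural {e' e : Fiber p b} {X : StructuredArrow b p}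
    (f : e' ⟶ e) (g : (fiberToStructuredArrow p b).obj e ⟶ X) :
    fiberHomEquiv p b e' X ((fiberToStructuredArrow p b).map f ≫ g) =
      f ≫ fiberHomEquiv p b e X g := by
  haveI := aux_isHomLift p b g
  haveI := aux_isHomLift p b ((fiberToStructuredArrow p b).map f ≫ g)
  haveI := f.2
  haveI : p.IsHomLift (𝟙 ((Functor.fromPUnit b).obj X.left)) (f.1 ≫ (IsStronglyCartesian.map p
      X.hom (pullbackMap rfl X.hom) (Category.id_comp X.hom).symm g.right : _)) :=
    @IsHomLift.comp_of_lift_id _ _ _ _ p b _ _ _ _ _ _ (IsStronglyCartesian.map_isHomLift p X.hom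
      (pullbackMap rfl X.hom) (Category.id_comp X.hom).symm g.right)
  haveI : p.IsHomLift (𝟙 b) ((f.1 ≫ (IsStronglyCartesian.map p X.hom (pullbackMap rfl X.hom)
      (Category.id_comp X.hom).symm g.right : _)) : ((fiberToStructuredArrow p b).obj e').right ⟶ _) := @IsHomLift.comp_of_lift_id _ _ _ _ p b _ _ _ _ _ f.2 (IsStronglyCartesian.map_isHomLift p X.hom
      (pullbackMap rfl X.hom) (Category.id_comp X.hom).symm g.right)
  apply Fiber.hom_ext
  refine (@IsStronglyCartesian.map_uniq _ _ _ _ p _ _ _ _ X.hom (pullbackMap rfl X.hom) _ _ _ _ _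
    (Category.id_comp X.hom).symm ((fiberToStructuredArrow p b).map f ≫ g).right _
    (f.1 ≫ (IsStronglyCartesian.map p X.hom (pullbackMap rfl X.hom)
      (Category.id_comp X.hom).symm g.right : _)) this ?_).symm
  erw [Category.assoc, IsStronglyCartesian.fac]
  rfl

/-- The adjunction exhibiting `fiberToStructuredArrow` as a left adjoint. -/
noncomputable def fiberAdj : fiberToStructuredArrow p b ⊣
    Adjunction.rightAdjointOfEquiv (fiberHomEquiv p b) (fun _ _ _ => fiberHomEquiv_natural p b) :=
  Adjunction.adjunctionOfEquivRight _ _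

instance : (fiberToStructuredArrow p b).Initial :=
  Functor.initial_of_adjunction (fiberAdj p b)

end Aux

/-- If `p : E ⥤ B` is a Grothendieck fibration and `C` is complete, then the
pointwise right Kan extension of `F : E ⥤ C` along `p`, evaluated at `b : B`, is
naturally isomorphic to the limit of the restriction of `F` to the fiber `E_b`. -/
theorem pointwiseRightKanExtension_obj_iso_limit_fiber
    {C : Type u₂} [Category.{v₂} C] [HasLimitsOfSize.{u, u} C]
    (p : E ⥤ B) [p.IsFibered] (F : E ⥤ C) (b : B) :
    Nonempty ((p.pointwiseRightKanExtension F).obj b ≅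
      limit (Fiber.fiberInclusion ⋙ F : Fiber p b ⥤ C)) := by
  refine ⟨(Functor.Initial.limitIso (fiberToStructuredArrow p b)
    (StructuredArrow.proj b p ⋙ F)).symm ≪≫ ?_⟩
  exact HasLimit.isoOfNatIso (Iso.refl _)
end

section
/- Let p : D ⥤ S be a Grothendieck fibration and I any category. Then the induced postcomposition functor (p ∘ -) : Fun(I, D) ⥤ Fun(I, S) between functor categories is again a Grothendieck fibration; cartesian lifts are constructed objectwise using a cleavage of p. -/
open CategoryTheory

universe v₁ v₂ v₃ u₁ u₂ u₃

section Aux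

variable {D : Type u₁} {S : Type u₂} {I : Type u₃}
    [Category.{v₁} D] [Category.{v₂} S] [Category.{v₃} I]

/-- A natural transformation lift is a lift componentwise. -/
lemma isHomLift_app (p : D ⥤ S) {F F' : I ⥤ D} {G G' : I ⥤ S}
    (η : G ⟶ G') (Θ : F ⟶ F') [((Functor.whiskeringRight I D S).obj p).IsHomLift η Θ] (i : I) :
    p.IsHomLift (η.app i) (Θ.app i) := by
  obtain ⟨⟩ := (inferInstance : Functor.IsHomLift ((Functor.whiskeringRight I D S).obj p) η Θ)
  exact inferInstanceAs (p.IsHomLift (p.map (Θ.app i)) (Θ.app i))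

end Aux

/-- If `p : D ⥤ S` is a Grothendieck fibration, then for any category `I` the induced
postcomposition functor `(I ⥤ D) ⥤ (I ⥤ S)` between functor categories is again a
Grothendieck fibration. -/
theorem whiskeringRight_isFibered {D : Type u₁} {S : Type u₂} {I : Type u₃}
    [Category.{v₁} D] [Category.{v₂} S] [Category.{v₃} I]
    (p : D ⥤ S) [p.IsFibered] :
    ((Functor.whiskeringRight I D S).obj p).IsFibered := by
  set P := (Functor.whiskeringRight I D S).obj p with hP
  apply Functor.IsFibered.of_exists_isStronglyCartesian
  intro F G f
  -- reinterpret the components of `f`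
  let f' : ∀ i : I, G.obj i ⟶ p.obj (F.obj i) := fun i => f.app i
  -- objectwise cleavage
  let H₀ : ∀ i : I, D := fun i =>
    Functor.IsPreFibered.pullbackObj (p := p) (rfl : p.obj (F.obj i) = p.obj (F.obj i)) (f' i)
  let φ₀ : ∀ i : I, H₀ i ⟶ F.obj i := fun i =>
    Functor.IsPreFibered.pullbackMap (p := p) rfl (f' i)
  haveI hcart : ∀ i, p.IsStronglyCartesian (f' i) (φ₀ i) := fun i => inferInstance
  have hnat : ∀ {i j : I} (u : i ⟶ j), G.map u ≫ f' j = f' i ≫ p.map (F.map u) :=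
    fun {i j} u => f.naturality u
  have lift1 : ∀ {i j : I} (u : i ⟶ j),
      p.IsHomLift (G.map u ≫ f' j) (φ₀ i ≫ F.map u) := by
    intro i j u
    have h1 : p.IsHomLift (f' i ≫ p.map (F.map u)) (φ₀ i ≫ F.map u) := inferInstance
    rw [hnat u]
    exact h1
  -- the objectwise pullback functor
  let H : I ⥤ D :=
    { obj := H₀
      map := fun {i j} u =>
        haveI := lift1 u
        Functor.IsStronglyCartesian.map p (f' j) (φ₀ j) (g := G.map u)
          (f' := G.map u ≫ f' j) rfl (φ₀ i ≫ F.map u)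
      map_id := by
        intro i
        haveI := lift1 (𝟙 i)
        symm
        haveI : p.IsHomLift (G.map (𝟙 i)) (𝟙 (H₀ i)) := by
          rw [G.map_id]
          exact CategoryTheory.IsHomLift.id (IsHomLift.domain_eq p (f' i) (φ₀ i))
        apply Functor.IsStronglyCartesian.map_uniq p (f' i) (φ₀ i) (g := G.map (𝟙 i)) rfl
          (φ₀ i ≫ F.map (𝟙 i))
        simp
      map_comp := by
        intro i j k u v
        haveI := lift1 u; haveI := lift1 v; haveI := lift1 (u ≫ v)
        symm
        haveI : p.IsHomLift (G.map (u ≫ v))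
            (Functor.IsStronglyCartesian.map p (f' j) (φ₀ j) (g := G.map u)
              (f' := G.map u ≫ f' j) rfl (φ₀ i ≫ F.map u) ≫
            Functor.IsStronglyCartesian.map p (f' k) (φ₀ k) (g := G.map v)
              (f' := G.map v ≫ f' k) rfl (φ₀ j ≫ F.map v)) := by
          rw [G.map_comp]
          infer_instance
        apply Functor.IsStronglyCartesian.map_uniq p (f' k) (φ₀ k) (g := G.map (u ≫ v)) rfl
          (φ₀ i ≫ F.map (u ≫ v))
        simp }
  -- the cartesian lift
  let φ : H ⟶ F :=
    { app := φ₀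
      naturality := fun i j u => by
        haveI := lift1 u
        exact Functor.IsStronglyCartesian.fac p (f' j) (φ₀ j)
          (g := G.map u) rfl (φ₀ i ≫ F.map u) }
  have homLiftHmap : ∀ {i j : I} (u : i ⟶ j), p.IsHomLift (G.map u) (H.map u) := by
    intro i j u
    haveI := lift1 u
    exact Functor.IsStronglyCartesian.map_isHomLift p (f' j) (φ₀ j) (g := G.map u) rfl
      (φ₀ i ≫ F.map u)
  have hobj : ∀ i, p.obj (H.obj i) = G.obj i :=
    fun i => IsHomLift.domain_eq p (f' i) (φ₀ i)
  have hH : P.obj H = G :=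
    CategoryTheory.Functor.ext hobj (fun i j u =>
      haveI := homLiftHmap u
      IsHomLift.fac' p (G.map u) (H.map u))
  refine ⟨H, φ, ?_⟩
  haveI hlift : P.IsHomLift f φ := by
    apply IsHomLift.of_fac' P f φ hH rfl
    ext i
    have h := IsHomLift.fac' p (f' i) (φ₀ i)
    simp only [eqToHom_refl, Category.comp_id] at h
    show p.map (φ₀ i) = _
    rw [h]
    simp only [NatTrans.comp_app, eqToHom_app, eqToHom_refl, Category.comp_id]
    rfl
  constructor
  intro H' g φ' hφ'
  haveI hφ'app : ∀ i, p.IsHomLift (g.app i ≫ f' i) (φ'.app i) := fun i =>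
    isHomLift_app p (g ≫ f) φ' i
  -- construct the induced map componentwise
  let χapp : ∀ i, H'.obj i ⟶ H.obj i := fun i =>
    Functor.IsStronglyCartesian.map p (f' i) (φ₀ i) (g := g.app i)
      (f' := g.app i ≫ f' i) rfl (φ'.app i)
  haveI χlift : ∀ i, p.IsHomLift (g.app i) (χapp i) := fun i =>
    Functor.IsStronglyCartesian.map_isHomLift p (f' i) (φ₀ i) rfl (φ'.app i)
  have χfac : ∀ i, χapp i ≫ φ₀ i = φ'.app i := fun i =>
    Functor.IsStronglyCartesian.fac p (f' i) (φ₀ i) rfl (φ'.app i)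
  let χ : H' ⟶ H :=
    { app := χapp
      naturality := by
        intro i j u
        haveI h1 : p.IsHomLift (g.app i ≫ G.map u) (χapp i ≫ H.map u) := by
          haveI := homLiftHmap u
          infer_instance
        haveI h2 : p.IsHomLift (g.app i ≫ G.map u) (H'.map u ≫ χapp j) := by
          have h3 : p.IsHomLift (p.map (H'.map u) ≫ g.app j) (H'.map u ≫ χapp j) :=
            inferInstance
          have h4 : p.map (H'.map u) ≫ g.app j = g.app i ≫ G.map u := g.naturality u
          rwa [h4] at h3
        haveI := lift1 u
        apply Functor.IsStronglyCartesian.ext p (f' j) (φ₀ j) (g.app i ≫ G.map u)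
        show (H'.map u ≫ χapp j) ≫ φ.app j = (χapp i ≫ H.map u) ≫ φ.app j
        rw [Category.assoc, Category.assoc, χfac j, φ.naturality u, ← Category.assoc,
          χfac i, φ'.naturality u] }
  refine ⟨χ, ⟨?_, ?_⟩, ?_⟩
  · apply IsHomLift.of_fac' P g χ rfl hH
    ext i
    have h := IsHomLift.fac' p (g.app i) (χapp i)
    simp only [eqToHom_refl, Category.id_comp] at h
    show p.map (χapp i) = _
    rw [h]
    simp only [NatTrans.comp_app, eqToHom_app, eqToHom_refl, Category.id_comp]
  · ext i
    exact χfac i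
  · rintro τ ⟨hτ₁, hτ₂⟩
    ext i
    haveI : p.IsHomLift (g.app i) (τ.app i) := isHomLift_app p g τ i
    have h : τ.app i ≫ φ₀ i = φ'.app i := congrArg (fun θ => NatTrans.app θ i) hτ₂
    exact Functor.IsStronglyCartesian.map_uniq p (f' i) (φ₀ i) rfl (φ'.app i) (τ.app i) h
end
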